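/- Let M be a nonempty connected topological space and let ≪ be a transitive, irreflexive binary relation on M with open pasts and open futures. Suppose φ : M → M is a homeomorphism that is ≪-equivariant and timelike. Then the whole space M is a TIP and also a TIF. (This is the abstract, order-topological form of the paper's Theorem: a connected chronological spacetime admitting a timelike conformal transformation has M as an element of both its future and past causal boundary; the relation ≪ carries exactly the properties of the chronological relation used in the proof.) -/

import Mathlib

open Set Filter Topology MeasureTheory

/-- The chronological past of a set `A` with respect to relation `r`. -/
def chronPast {M : Type*} (r : M → M → Prop) (A : Set M) : Set M :=
  {x | ∃ y ∈ A, r x y}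

/-- The chronological future of a set `A` with respect to relation `r`. -/
def chronFut {M : Type*} (r : M → M → Prop) (A : Set M) : Set M :=
  {x | ∃ y ∈ A, r y x}

/-- A past set: `I⁻(U) = U`. -/
def IsPastSet {M : Type*} (r : M → M → Prop) (U : Set M) : Prop :=
  chronPast r U = U

/-- A future set: `I⁺(U) = U`. -/
def IsFutureSet {M : Type*} (r : M → M → Prop) (U : Set M) : Prop :=
  chronFut r U = U

/-- An indecomposable past set (IP): a nonempty past set that is not the union of
two past sets, each a proper subset of it. -/
def IsIP {M : Type*} (r : M → M → Prop) (U : Set M) : Prop :=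
  U.Nonempty ∧ IsPastSet r U ∧
    ¬ ∃ A B : Set M, IsPastSet r A ∧ IsPastSet r B ∧ A ⊂ U ∧ B ⊂ U ∧ A ∪ B = U

/-- An indecomposable future set (IF). -/
def IsIF {M : Type*} (r : M → M → Prop) (U : Set M) : Prop :=
  U.Nonempty ∧ IsFutureSet r U ∧
    ¬ ∃ A B : Set M, IsFutureSet r A ∧ IsFutureSet r B ∧ A ⊂ U ∧ B ⊂ U ∧ A ∪ B = U

/-- A terminal indecomposable past set (TIP): an IP not of the form `I⁻(p)`. -/
def IsTIP {M : Type*} (r : M → M → Prop) (U : Set M) : Prop :=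
  IsIP r U ∧ ∀ p : M, U ≠ chronPast r {p}

/-- A terminal indecomposable future set (TIF): an IF not of the form `I⁺(p)`. -/
def IsTIF {M : Type*} (r : M → M → Prop) (U : Set M) : Prop :=
  IsIF r U ∧ ∀ p : M, U ≠ chronFut r {p}

/-- A minimal TIP: a TIP containing no TIP as a proper subset. -/
def IsMinTIP {M : Type*} (r : M → M → Prop) (U : Set M) : Prop :=
  IsTIP r U ∧ ∀ V : Set M, IsTIP r V → V ⊆ U → V = U

theorem key_tip {M : Type*} [TopologicalSpace M] [Nonempty M] [ConnectedSpace M]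
    (r : M → M → Prop) (htrans : Transitive r) (hirr : Irreflexive r)
    (hOpenPast : ∀ p : M, IsOpen (chronPast r {p}))
    (hOpenFut : ∀ p : M, IsOpen (chronFut r {p}))
    (φ : M ≃ₜ M)
    (hequiv : ∀ x y : M, r x y ↔ r (φ x) (φ y))
    (htimelike : ∀ x : M, r x (φ x)) :
    IsTIP r (Set.univ : Set M) := by
  have hchain : ∀ (x : M) (n : ℕ), r x ((⇑φ)^[n+1] x) := by
    intro x n
    induction n with
    | zero => simpa using htimelike x
    | succ n ih =>
      have h2 : r ((⇑φ)^[n+1] x) ((⇑φ)^[n+2] x) := by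
        rw [Function.iterate_succ_apply' (⇑φ) (n+1)]
        exact htimelike _
      exact htrans ih h2
  obtain ⟨a⟩ := ‹Nonempty M›
  set U : Set M := {y | ∃ n, r y ((⇑φ)^[n] a)} with hU
  have hUopen : IsOpen U := by
    have hrw : U = ⋃ n, chronPast r {(⇑φ)^[n] a} := by
      ext y; simp [chronPast, hU]
    rw [hrw]; exact isOpen_iUnion fun n => hOpenPast _
  have hUclosed : IsClosed U := by
    rw [← isOpen_compl_iff, isOpen_iff_mem_nhds]
    intro y hy
    rw [mem_nhds_iff]
    refine ⟨chronFut r {φ.symm y}, ?_, hOpenFut _, ?_⟩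
    · intro z hz hzU
      obtain ⟨n, hn⟩ := hzU
      obtain ⟨w, hw, hwz⟩ := hz
      have hw' : w = φ.symm y := hw
      have h1 : r (φ.symm y) ((⇑φ)^[n] a) := htrans (hw' ▸ hwz) hn
      have h2 : r y ((⇑φ)^[n+1] a) := by
        have h3 := (hequiv (φ.symm y) ((⇑φ)^[n] a)).mp h1
        simpa [Function.iterate_succ_apply'] using h3
      exact hy ⟨n+1, h2⟩
    · refine ⟨φ.symm y, rfl, ?_⟩
      simpa using htimelike (φ.symm y)
  have hUuniv : U = Set.univ :=
    IsClopen.eq_univ ⟨hUclosed, hUopen⟩ ⟨a, 1, by simpa using htimelike a⟩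
  have hle : ∀ (x : M) (n k : ℕ), n ≤ k → r x ((⇑φ)^[n] a) → r x ((⇑φ)^[k+1] a) := by
    intro x n k hnk h
    obtain ⟨d, rfl⟩ := Nat.exists_eq_add_of_le hnk
    have h2 := hchain ((⇑φ)^[n] a) d
    rw [← Function.iterate_add_apply] at h2
    have h3 : r ((⇑φ)^[n] a) ((⇑φ)^[n+d+1] a) := by
      have he : d + 1 + n = n + d + 1 := by omega
      rwa [he] at h2
    exact htrans h h3
  have hdir : ∀ b c : M, ∃ z, r b z ∧ r c z := by
    intro b c
    have hb : b ∈ U := hUuniv ▸ Set.mem_univ b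
    have hc : c ∈ U := hUuniv ▸ Set.mem_univ c
    obtain ⟨n, hn⟩ := hb
    obtain ⟨m, hm⟩ := hc
    exact ⟨(⇑φ)^[max n m + 1] a, hle b n _ (le_max_left n m) hn,
      hle c m _ (le_max_right n m) hm⟩
  refine ⟨⟨⟨a, trivial⟩, ?_, ?_⟩, ?_⟩
  · ext x
    simp only [chronPast, Set.mem_setOf_eq, Set.mem_univ, iff_true]
    exact ⟨φ x, trivial, htimelike x⟩
  · rintro ⟨A, B, hA, hB, hAsub, hBsub, hAB⟩
    obtain ⟨b, -, hbA⟩ := Set.not_subset.mp (fun h => hAsub.2 (fun x _ => h trivial))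
    obtain ⟨c, -, hcB⟩ := Set.not_subset.mp (fun h => hBsub.2 (fun x _ => h trivial))
    obtain ⟨z, hbz, hcz⟩ := hdir b c
    have hz : z ∈ A ∪ B := hAB ▸ Set.mem_univ z
    rcases hz with hz | hz
    · exact hbA (hA ▸ ⟨z, hz, hbz⟩)
    · exact hcB (hB ▸ ⟨z, hz, hcz⟩)
  · intro p hp
    have hpp : p ∈ chronPast r {p} := hp ▸ Set.mem_univ p
    obtain ⟨y, hy, hr⟩ := hpp
    exact hirr p ((show y = p from hy) ▸ hr)

/-- On a nonempty connected topological space with a transitive,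
irreflexive chronological relation having open pasts and open futures, if there is a
homeomorphism that is equivariant and timelike, then `M` itself is a TIP and a TIF. -/
theorem stmt_0 {M : Type*} [TopologicalSpace M] [Nonempty M] [ConnectedSpace M]
    (r : M → M → Prop) (htrans : Transitive r) (hirr : Irreflexive r)
    (hOpenPast : ∀ p : M, IsOpen (chronPast r {p}))
    (hOpenFut : ∀ p : M, IsOpen (chronFut r {p}))
    (φ : M ≃ₜ M)
    (hequiv : ∀ x y : M, r x y ↔ r (φ x) (φ y))
    (htimelike : ∀ x : M, r x (φ x)) :
    IsTIP r (Set.univ : Set M) ∧ IsTIF r (Set.univ : Set M) := by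
  constructor
  · exact key_tip r htrans hirr hOpenPast hOpenFut φ hequiv htimelike
  · exact key_tip (flip r) (fun _ _ _ h1 h2 => htrans h2 h1) hirr
      (fun p => hOpenFut p) (fun p => hOpenPast p) φ.symm
      (fun x y => by
        simpa [flip] using (hequiv (φ.symm y) (φ.symm x)).symm)
      (fun x => by simpa [flip] using htimelike (φ.symm x))
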